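/- arXiv:1705.06473 — 4 statements merged into one kernel-verified Lean document; each statement's English description precedes it below -/
import Mathlib

section
/- For k ≥ 2 and p ∈ (0,1), the difference p^{k-1} - (2p^k - p^{2k}) factors as p^{k-1}(p-1)(p^k + p^{k-1} + ... + p - 1). Consequently this difference is positive for p < γ_k and negative for p > γ_k, where γ_k is the unique root of p^k + ... + p - 1 in (0,1). -/
/-- For `k ≥ 2` and `p ∈ (0,1)`, the difference `p^{k-1} - (2p^k - p^{2k})`
factors as `p^{k-1}(p-1)(p^k + ⋯ + p - 1)`; consequently it is positive for
`p < γ_k` and negative for `p > γ_k`, where `γ_k` is the unique root of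
`p^k + ⋯ + p - 1` in `(0,1)`. -/
theorem stmt_2 (k : ℕ) (hk : 2 ≤ k) (γ : ℝ) (hγ : γ ∈ Set.Ioo (0 : ℝ) 1)
    (hroot : (∑ i ∈ Finset.Icc 1 k, γ ^ i) - 1 = 0) :
    (∀ p : ℝ, p ^ (k - 1) - (2 * p ^ k - p ^ (2 * k)) =
      p ^ (k - 1) * (p - 1) * ((∑ i ∈ Finset.Icc 1 k, p ^ i) - 1)) ∧
    (∀ p ∈ Set.Ioo (0 : ℝ) 1, p < γ →
      0 < p ^ (k - 1) - (2 * p ^ k - p ^ (2 * k))) ∧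
    (∀ p ∈ Set.Ioo (0 : ℝ) 1, γ < p →
      p ^ (k - 1) - (2 * p ^ k - p ^ (2 * k)) < 0) := by
  obtain ⟨hγ0, hγ1⟩ := hγ
  have hsum : ∀ (n : ℕ) (p : ℝ), (∑ i ∈ Finset.Icc 1 n, p ^ i)
      = p * ∑ i ∈ Finset.range n, p ^ i := by
    intro n p
    induction n with
    | zero => simp
    | succ n ih =>
      rw [Finset.sum_Icc_succ_top (by omega), ih, Finset.sum_range_succ, mul_add,
        pow_succ]
      ring
  have hid : ∀ p : ℝ, p ^ (k - 1) - (2 * p ^ k - p ^ (2 * k)) =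
      p ^ (k - 1) * (p - 1) * ((∑ i ∈ Finset.Icc 1 k, p ^ i) - 1) := by
    intro p
    obtain ⟨m, rfl⟩ : ∃ m, k = m + 2 := ⟨k - 2, by omega⟩
    rw [hsum _ p]
    have hg : (∑ i ∈ Finset.range (m + 2), p ^ i) * (p - 1) = p ^ (m + 2) - 1 :=
      geom_sum_mul p (m + 2)
    have h1 : m + 2 - 1 = m + 1 := rfl
    have h2 : 2 * (m + 2) = (m + 1) + (m + 3) := by omega
    rw [h1, h2, pow_add]
    linear_combination (-(p ^ (m + 1) * p)) * hg
  have hmono : ∀ p q : ℝ, 0 ≤ p → p < q →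
      (∑ i ∈ Finset.Icc 1 k, p ^ i) < ∑ i ∈ Finset.Icc 1 k, q ^ i := by
    intro p q hp hpq
    apply Finset.sum_lt_sum
    · intro i _; exact pow_le_pow_left₀ hp hpq.le i
    · exact ⟨1, Finset.mem_Icc.mpr ⟨le_refl 1, by omega⟩, by simpa using hpq⟩
  refine ⟨hid, ?_, ?_⟩
  · rintro p ⟨hp0, hp1⟩ hpγ
    rw [hid p]
    have h1 : (∑ i ∈ Finset.Icc 1 k, p ^ i) - 1 < 0 := by
      have := hmono p γ hp0.le hpγ
      linarith
    have h2 : p ^ (k - 1) * (p - 1) < 0 :=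
      mul_neg_of_pos_of_neg (pow_pos hp0 _) (by linarith)
    exact mul_pos_of_neg_of_neg h2 h1
  · rintro p ⟨hp0, hp1⟩ hγp
    rw [hid p]
    have h1 : 0 < (∑ i ∈ Finset.Icc 1 k, p ^ i) - 1 := by
      have := hmono γ p hγ0.le hγp
      linarith
    exact mul_neg_of_neg_of_pos
      (mul_neg_of_pos_of_neg (pow_pos hp0 _) (by linarith)) h1
end

section
/- Let p_1, p_2 : ℝ → ℝ be polynomials and z ∈ (0,1) with p_1(z) = p_2(z). Then the function x ↦ min(p_1(x), p_2(x)) fails to be m-times differentiable (but is (m-1)-times differentiable) at z if and only if p_1 - p_2 has a zero of odd order m at z. -/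
open Filter Topology Polynomial

noncomputable def fm (m : ℕ) : ℝ → ℝ := fun x => x ^ m * |x|

lemma fm_cont (m : ℕ) : Continuous (fm m) := by
  exact (continuous_pow m).mul continuous_abs

lemma fm_zero (m : ℕ) : fm m 0 = 0 := by simp [fm]

lemma fm_hasDerivAt (m : ℕ) (x : ℝ) :
    HasDerivAt (fm (m + 1)) (((m : ℝ) + 2) * fm m x) x := by
  rcases lt_trichotomy x 0 with hx | hx | hx
  · have hev : fm (m + 1) =ᶠ[𝓝 x] fun y => -(y ^ (m + 2)) := by
      filter_upwards [Iio_mem_nhds hx] with y hy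
      simp only [fm, abs_of_neg (Set.mem_Iio.mp hy)]
      ring
    have : HasDerivAt (fun y : ℝ => -(y ^ (m + 2))) (-((m + 2 : ℕ) * x ^ (m + 1))) x :=
      (hasDerivAt_pow (m + 2) x).neg
    refine (this.congr_of_eventuallyEq hev).congr_deriv ?_
    simp only [fm, abs_of_neg hx]
    push_cast
    ring
  · subst hx
    rw [hasDerivAt_iff_tendsto_slope]
    have h1 : Tendsto (fm m) (𝓝[≠] (0:ℝ)) (𝓝 0) := by
      have := (fm_cont m).tendsto 0
      rw [fm_zero] at this
      exact this.mono_left nhdsWithin_le_nhds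
    rw [show ((m : ℝ) + 2) * fm m 0 = 0 by simp [fm_zero]]
    refine h1.congr' ?_
    filter_upwards [self_mem_nhdsWithin] with y hy
    have hy' : (y : ℝ) ≠ 0 := hy
    simp only [slope_def_field, fm, fm_zero]
    field_simp
    ring
  · have hev : fm (m + 1) =ᶠ[𝓝 x] fun y => y ^ (m + 2) := by
      filter_upwards [Ioi_mem_nhds hx] with y hy
      simp only [fm, abs_of_pos (Set.mem_Ioi.mp hy)]
      ring
    have : HasDerivAt (fun y : ℝ => y ^ (m + 2)) ((m + 2 : ℕ) * x ^ (m + 1)) x :=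
      hasDerivAt_pow (m + 2) x
    refine (this.congr_of_eventuallyEq hev).congr_deriv ?_
    simp only [fm, abs_of_pos hx]
    push_cast
    ring

lemma fm_deriv (m : ℕ) : deriv (fm (m + 1)) = fun x => ((m : ℝ) + 2) * fm m x :=
  funext fun x => (fm_hasDerivAt m x).deriv

lemma fm_contDiff (m : ℕ) : ContDiff ℝ m (fm m) := by
  induction m with
  | zero =>
    rw [show ((0 : ℕ) : WithTop ℕ∞) = 0 by rfl, contDiff_zero]
    exact fm_cont 0
  | succ n ih =>
    rw [show ((n + 1 : ℕ) : WithTop ℕ∞) = (n : ℕ) + 1 by push_cast; rfl,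
      contDiff_succ_iff_deriv]
    refine ⟨fun x => (fm_hasDerivAt n x).differentiableAt, by simp, ?_⟩
    rw [fm_deriv]
    exact ih.const_smul ((n : ℝ) + 2)

lemma fm_iteratedDeriv (m : ℕ) :
    ∃ c : ℝ, 0 < c ∧ iteratedDeriv m (fm m) = fun x => c * |x| := by
  induction m with
  | zero => exact ⟨1, one_pos, by funext x; simp [fm]⟩
  | succ n ih =>
    obtain ⟨c, hc, hder⟩ := ih
    refine ⟨((n : ℝ) + 2) * c, by positivity, ?_⟩
    rw [iteratedDeriv_succ', fm_deriv]
    have key : ∀ x : ℝ, iteratedDeriv n (fun x => ((n : ℝ) + 2) * fm n x) x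
        = ((n : ℝ) + 2) * iteratedDeriv n (fm n) x := by
      intro x
      rw [← iteratedDerivWithin_univ, ← iteratedDerivWithin_univ]
      exact iteratedDerivWithin_const_mul (Set.mem_univ x) uniqueDiffOn_univ _
        (fm_contDiff n).contDiffAt.contDiffWithinAt
    funext x
    rw [key x, hder]
    ring

lemma contDiff_polyEval (n : WithTop ℕ∞) (p : Polynomial ℝ) :
    ContDiff ℝ n fun x => p.eval x := by
  induction p using Polynomial.induction_on' with
  | add p q hp hq => simpa [Polynomial.eval_add] using hp.add hq
  | monomial k a =>
    simpa [Polynomial.eval_monomial] using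
      (contDiff_const.mul (contDiff_id.pow k) : ContDiff ℝ n fun x : ℝ => a * x ^ k)

lemma abs_pow_eq_fm {k : ℕ} (hk : Odd k) (x : ℝ) : |x| ^ k = fm (k - 1) x := by
  obtain ⟨j, rfl⟩ := hk
  have h1 : 2 * j + 1 - 1 = 2 * j := rfl
  rw [h1]
  simp only [fm, pow_succ, (even_two_mul j).pow_abs]

lemma fm_contDiffAt_ne (m : ℕ) {x : ℝ} (hx : x ≠ 0) (n : WithTop ℕ∞) :
    ContDiffAt ℝ n (fm m) x := by
  rcases hx.lt_or_gt with hx | hx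
  · have hev : (fun y : ℝ => -(y ^ (m + 1))) =ᶠ[𝓝 x] fm m := by
      filter_upwards [Iio_mem_nhds hx] with y hy
      simp only [fm, abs_of_neg (Set.mem_Iio.mp hy)]
      ring
    exact ((contDiff_id.pow (m+1)).neg.contDiffAt (x := x)).congr_of_eventuallyEq hev.symm
  · have hev : (fun y : ℝ => y ^ (m + 1)) =ᶠ[𝓝 x] fm m := by
      filter_upwards [Ioi_mem_nhds hx] with y hy
      simp only [fm, abs_of_pos (Set.mem_Ioi.mp hy)]
      ring
    exact ((contDiff_id.pow (m+1)).contDiffAt (x := x)).congr_of_eventuallyEq hev.symm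

lemma not_contDiffAt_fm {k : ℕ} (hk : Odd k) :
    ¬ ContDiffAt ℝ (k : ℕ∞) (fm (k - 1)) 0 := by
  intro h
  have hglob : ContDiff ℝ (k : ℕ∞) (fm (k - 1)) := by
    rw [contDiff_iff_contDiffAt]
    intro x
    rcases eq_or_ne x 0 with rfl | hx
    · exact h
    · exact fm_contDiffAt_ne _ hx _
  have hd : Differentiable ℝ (iteratedDeriv (k - 1) (fm (k - 1))) := by
    refine hglob.differentiable_iteratedDeriv (k - 1) ?_
    exact Nat.cast_lt.mpr (Nat.sub_lt hk.pos one_pos)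
  obtain ⟨c, hc, heq⟩ := fm_iteratedDeriv (k - 1)
  rw [heq] at hd
  have h2 : DifferentiableAt ℝ (fun x : ℝ => c⁻¹ * (c * |x|)) 0 := (hd 0).const_mul c⁻¹
  have h3 : DifferentiableAt ℝ (abs : ℝ → ℝ) 0 := by
    refine h2.congr_of_eventuallyEq (Filter.Eventually.of_forall fun x => ?_)
    field_simp
  exact not_differentiableAt_abs_zero h3

/-- Let `p₁, p₂` be real polynomials and `z ∈ (0,1)` with `p₁(z) = p₂(z)`.
For `m ≥ 1`, the function `x ↦ min (p₁ x) (p₂ x)` is `(m-1)`-times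
differentiable but not `m`-times differentiable at `z` (in the `C^n` sense,
with `0`-times differentiable meaning continuous) if and only if `p₁ - p₂`
has a zero of odd order `m` at `z`. -/
theorem stmt_5 (p₁ p₂ : Polynomial ℝ) (z : ℝ) (hz : z ∈ Set.Ioo (0 : ℝ) 1)
    (heq : p₁.eval z = p₂.eval z) (m : ℕ) (hm : 1 ≤ m) :
    (ContDiffAt ℝ ((m - 1 : ℕ) : ℕ∞) (fun x => min (p₁.eval x) (p₂.eval x)) z ∧
      ¬ ContDiffAt ℝ ((m : ℕ) : ℕ∞) (fun x => min (p₁.eval x) (p₂.eval x)) z)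
    ↔ (Odd m ∧ Polynomial.rootMultiplicity z (p₁ - p₂) = m) := by
  set q : Polynomial ℝ := p₁ - p₂ with hqdef
  have hq0 : q.eval z = 0 := by simp [hqdef, heq]
  have hmin : ∀ x : ℝ, min (p₁.eval x) (p₂.eval x)
      = (p₁.eval x + p₂.eval x - |q.eval x|) / 2 := by
    intro x
    simp only [hqdef, Polynomial.eval_sub]
    rcases le_total (p₁.eval x) (p₂.eval x) with h | h
    · rw [min_eq_left h, abs_of_nonpos (by linarith)]; ring
    · rw [min_eq_right h, abs_of_nonneg (by linarith)]; ring
  have htrans : ∀ n : WithTop ℕ∞,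
      ContDiffAt ℝ n (fun x => min (p₁.eval x) (p₂.eval x)) z ↔
      ContDiffAt ℝ n (fun x => |q.eval x|) z := by
    intro n
    constructor
    · intro h
      have h2 : ContDiffAt ℝ n (fun x => p₁.eval x + p₂.eval x
          - 2 * min (p₁.eval x) (p₂.eval x)) z :=
        (((contDiff_polyEval n p₁).add (contDiff_polyEval n p₂)).contDiffAt).sub
          (contDiffAt_const.mul h)
      refine h2.congr_of_eventuallyEq (Filter.Eventually.of_forall fun x => ?_)
      simp only [hmin]; ring
    · intro h
      have h2 : ContDiffAt ℝ n (fun x => (p₁.eval x + p₂.eval x - |q.eval x|) / 2) z :=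
        ((((contDiff_polyEval n p₁).add (contDiff_polyEval n p₂)).contDiffAt).sub h).div_const 2
      exact h2.congr_of_eventuallyEq (Filter.Eventually.of_forall fun x => hmin x)
  by_cases hqz : q = 0
  · have hsm : ContDiffAt ℝ (m : ℕ∞) (fun x => |q.eval x|) z := by
      simp only [hqz, Polynomial.eval_zero, abs_zero]
      exact contDiffAt_const
    constructor
    · rintro ⟨-, h2⟩
      exact absurd ((htrans _).mpr hsm) h2
    · rintro ⟨-, h2⟩
      rw [hqz, Polynomial.rootMultiplicity_zero] at h2
      omega
  · set k := q.rootMultiplicity z with hkdef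
    have hk1 : 1 ≤ k := (Polynomial.rootMultiplicity_pos hqz).mpr hq0
    set r := q /ₘ (Polynomial.X - Polynomial.C z) ^ k with hrdef
    have hrz : r.eval z ≠ 0 := Polynomial.eval_divByMonic_pow_rootMultiplicity_ne_zero z hqz
    have hfact : ∀ x : ℝ, q.eval x = (x - z) ^ k * r.eval x := by
      intro x
      conv_lhs => rw [← Polynomial.pow_mul_divByMonic_rootMultiplicity_eq q z]
      simp [Polynomial.eval_mul, Polynomial.eval_pow]
      rfl
    set c : ℝ := if 0 < r.eval z then 1 else -1 with hcdef
    have hc1 : |c| = 1 := by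
      rw [hcdef]; split_ifs <;> simp
    have hcr : 0 < c * r.eval z := by
      rw [hcdef]; split_ifs with h
      · simpa using h
      · have := lt_of_le_of_ne (not_lt.mp h) hrz
        nlinarith
    have hev : ∀ᶠ x in 𝓝 z, 0 < c * r.eval x := by
      have hcont : ContinuousAt (fun x => c * r.eval x) z :=
        (continuous_const.mul (contDiff_polyEval 0 r).continuous).continuousAt
      exact hcont.eventually (eventually_gt_nhds hcr)
    have habs : ∀ᶠ x in 𝓝 z, |q.eval x| = |x - z| ^ k * (c * r.eval x) := by
      filter_upwards [hev] with x hx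
      rw [hfact x, abs_mul, abs_pow]
      congr 1
      rw [← one_mul |r.eval x|, ← hc1, ← abs_mul, abs_of_pos hx]
    rcases Nat.even_or_odd k with hke | hko
    · -- even case: smooth
      have hsm : ContDiffAt ℝ (m : ℕ∞) (fun x => |q.eval x|) z := by
        have h2 : ContDiffAt ℝ (m : ℕ∞) (fun x => (x - z) ^ k * (c * r.eval x)) z :=
          (((contDiff_id.sub contDiff_const).pow k).mul
            (contDiff_const.mul (contDiff_polyEval _ r))).contDiffAt
        refine h2.congr_of_eventuallyEq ?_
        filter_upwards [habs] with x hx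
        rw [hx, hke.pow_abs]
      constructor
      · rintro ⟨-, h2⟩
        exact absurd ((htrans _).mpr hsm) h2
      · rintro ⟨hodd, hkm⟩
        rw [hkm] at hke
        exact absurd hodd (Nat.not_odd_iff_even.mpr hke)
    · -- odd case
      have habs2 : ∀ᶠ x in 𝓝 z, |q.eval x| = fm (k - 1) (x - z) * (c * r.eval x) := by
        filter_upwards [habs] with x hx
        rw [hx, abs_pow_eq_fm hko]
      have hpos : ContDiffAt ℝ ((k - 1 : ℕ) : ℕ∞) (fun x => |q.eval x|) z := by
        have h1 : ContDiff ℝ ((k - 1 : ℕ) : ℕ∞) (fun x : ℝ => fm (k - 1) (x - z)) :=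
          (fm_contDiff (k - 1)).comp (contDiff_id.sub contDiff_const)
        exact ((h1.mul (contDiff_const.mul (contDiff_polyEval _ r))).contDiffAt).congr_of_eventuallyEq
          habs2
      have hneg : ¬ ContDiffAt ℝ (k : ℕ∞) (fun x => |q.eval x|) z := by
        intro h
        have hinv : ContDiffAt ℝ (k : ℕ∞) (fun x => (c * r.eval x)⁻¹) z :=
          ((contDiff_const.mul (contDiff_polyEval _ r)).contDiffAt).inv (ne_of_gt hcr)
        have h2 : ContDiffAt ℝ (k : ℕ∞) (fun x : ℝ => fm (k - 1) (x - z)) z := by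
          refine (h.mul hinv).congr_of_eventuallyEq ?_
          filter_upwards [habs2, hev] with x hx hx2
          rw [hx]
          field_simp
          rw [mul_assoc, mul_div_assoc, div_self hx2.ne', mul_one]
        have h4 : ContDiffAt ℝ (k : ℕ∞) (fm (k - 1)) 0 := by
          have h5 : ContDiffAt ℝ (k : ℕ∞)
              ((fun x : ℝ => fm (k - 1) (x - z)) ∘ fun y : ℝ => y + z) 0 := by
            refine ContDiffAt.comp 0 ?_ ((contDiff_id.add contDiff_const).contDiffAt)
            simpa using h2
          simpa [Function.comp_def, add_sub_cancel_right] using h5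
        exact not_contDiffAt_fm hko h4
      constructor
      · rintro ⟨hA, hB⟩
        rw [htrans] at hA hB
        have hmk : m = k := by
          by_contra hne
          rcases lt_or_gt_of_ne hne with hlt | hgt
          · exact hB (hpos.of_le (Nat.cast_le.mpr (Nat.le_sub_one_of_lt hlt)))
          · exact hneg (hA.of_le (Nat.cast_le.mpr (Nat.le_sub_one_of_lt hgt)))
        exact ⟨hmk ▸ hko, hmk.symm⟩
      · rintro ⟨hodd, hkm⟩
        refine ⟨?_, ?_⟩
        · rw [htrans, ← hkm]
          exact hpos
        · rw [htrans, ← hkm]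
          exact hneg
end

section
/- Let b ≥ 1 be an integer, a/b ∈ [0,1] rational, and m ≥ 1. If f(p) = ∑_{i=0}^m b_i p^i(1-p)^{m-i} with integers |b_i| ≤ C(m,i) and f is not the zero polynomial, then f has no root p ∈ ℝ with 0 < |p - a/b| < (3b)^{-m}. -/
open Polynomial Finset

namespace Stmt9Aux

/-- The shifted polynomial `P(t) = ∑ bᵢ (t+r)^i (1-(t+r))^(m-i)` as a polynomial in `t`. -/
noncomputable def P (m : ℕ) (bi : ℕ → ℤ) (r : ℝ) : ℝ[X] :=
  ∑ i ∈ Finset.range (m + 1),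
    C (bi i : ℝ) * (X + C r) ^ i * (C (1 - r) - X) ^ (m - i)

lemma eval_P (m : ℕ) (bi : ℕ → ℤ) (r t : ℝ) :
    (P m bi r).eval t
      = ∑ i ∈ Finset.range (m + 1), (bi i : ℝ) * (r + t) ^ i * (1 - (r + t)) ^ (m - i) := by
  simp only [P, eval_finset_sum, eval_mul, eval_pow, eval_add, eval_sub, eval_C, eval_X]
  refine Finset.sum_congr rfl fun i _ => ?_
  ring

lemma natDegree_P_le (m : ℕ) (bi : ℕ → ℤ) (r : ℝ) : (P m bi r).natDegree ≤ m := by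
  refine natDegree_sum_le_of_forall_le _ _ fun i hi => ?_
  have hi' : i ≤ m := Nat.lt_succ_iff.mp (Finset.mem_range.mp hi)
  have h1 : (X + C r : ℝ[X]).natDegree ≤ 1 := by
    simpa using natDegree_X_add_C (a := r) ▸ le_refl 1
  have h2 : (C (1 - r) - X : ℝ[X]).natDegree ≤ 1 := by
    refine (natDegree_sub_le _ _).trans ?_
    simp [natDegree_C, natDegree_X]
  calc (C (bi i : ℝ) * (X + C r) ^ i * (C (1 - r) - X) ^ (m - i)).natDegree
      ≤ (C (bi i : ℝ) * (X + C r) ^ i).natDegree + ((C (1 - r) - X) ^ (m - i)).natDegree :=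
        natDegree_mul_le
    _ ≤ ((C (bi i : ℝ)).natDegree + ((X + C r) ^ i).natDegree) + (m - i) * 1 := by
        gcongr
        · exact natDegree_mul_le
        · exact natDegree_pow_le_of_le _ h2
    _ ≤ (0 + i * 1) + (m - i) * 1 := by
        gcongr
        · exact le_of_eq (natDegree_C _)
        · exact natDegree_pow_le_of_le _ h1
    _ ≤ m := by omega

lemma abs_coeff_sub_pow (s : ℝ) (hs : 0 ≤ s) (k v : ℕ) :
    |((C s - X : ℝ[X]) ^ k).coeff v| = ((X + C s : ℝ[X]) ^ k).coeff v := by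
  have h : (C s - X : ℝ[X]) = -(X + C (-s)) := by rw [map_neg]; ring
  have hneg : ((-1 : ℝ[X]) ^ k) = C ((-1 : ℝ) ^ k) := by
    rw [map_pow, map_neg, map_one]
  rw [h, neg_pow, hneg, coeff_C_mul, coeff_X_add_C_pow, coeff_X_add_C_pow]
  rw [abs_mul, abs_mul, abs_pow, abs_pow, abs_neg, abs_one, one_pow, one_mul, abs_neg,
    abs_of_nonneg hs, Nat.abs_cast]

lemma coeff_X_add_C_pow_nonneg (s : ℝ) (hs : 0 ≤ s) (k v : ℕ) :
    0 ≤ ((X + C s : ℝ[X]) ^ k).coeff v := by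
  rw [coeff_X_add_C_pow]
  positivity

/-- termwise coefficient bound -/
lemma abs_coeff_term_le (r : ℝ) (hr0 : 0 ≤ r) (hr1 : r ≤ 1) (i k j : ℕ) :
    |((X + C r) ^ i * (C (1 - r) - X) ^ k : ℝ[X]).coeff j|
      ≤ ((X + C r) ^ i * (X + C (1 - r)) ^ k : ℝ[X]).coeff j := by
  rw [coeff_mul, coeff_mul]
  refine (Finset.abs_sum_le_sum_abs _ _).trans (Finset.sum_le_sum fun x _ => ?_)
  rw [abs_mul, abs_coeff_sub_pow (1 - r) (by linarith) k x.2]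
  have h1 : |((X + C r : ℝ[X]) ^ i).coeff x.1| = ((X + C r : ℝ[X]) ^ i).coeff x.1 :=
    abs_of_nonneg (coeff_X_add_C_pow_nonneg r hr0 i x.1)
  rw [h1]

lemma coeff_prod_nonneg (r : ℝ) (hr0 : 0 ≤ r) (hr1 : r ≤ 1) (i k j : ℕ) :
    0 ≤ ((X + C r) ^ i * (X + C (1 - r)) ^ k : ℝ[X]).coeff j := by
  rw [coeff_mul]
  refine Finset.sum_nonneg fun x _ => mul_nonneg ?_ ?_
  · exact coeff_X_add_C_pow_nonneg r hr0 i x.1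
  · exact coeff_X_add_C_pow_nonneg (1 - r) (by linarith) k x.2

lemma sum_coeff_prod (r : ℝ) (m i : ℕ) (hi : i ≤ m) :
    ∑ j ∈ Finset.range (m + 1), ((X + C r) ^ i * (X + C (1 - r)) ^ (m - i) : ℝ[X]).coeff j
      = (1 + r) ^ i * (2 - r) ^ (m - i) := by
  have hdeg : ((X + C r) ^ i * (X + C (1 - r)) ^ (m - i) : ℝ[X]).natDegree < m + 1 := by
    have h1 : (X + C r : ℝ[X]).natDegree ≤ 1 := (natDegree_X_add_C r).le
    have h2 : (X + C (1 - r) : ℝ[X]).natDegree ≤ 1 := (natDegree_X_add_C (1 - r)).le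
    have : ((X + C r) ^ i * (X + C (1 - r)) ^ (m - i) : ℝ[X]).natDegree
        ≤ i * 1 + (m - i) * 1 := by
      refine natDegree_mul_le.trans ?_
      gcongr
      · exact natDegree_pow_le_of_le _ h1
      · exact natDegree_pow_le_of_le _ h2
    omega
  have := eval_eq_sum_range' hdeg (1 : ℝ)
  simp only [one_pow, mul_one] at this
  rw [← this, eval_mul, eval_pow, eval_pow, eval_add, eval_add, eval_X, eval_C, eval_C]
  ring

/-- total coefficient bound: `∑ |coeff j (P)| ≤ 3^m`. -/
lemma sum_abs_coeff_le (m : ℕ) (bi : ℕ → ℤ) (hbi : ∀ i ≤ m, |bi i| ≤ (m.choose i : ℤ))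
    (r : ℝ) (hr0 : 0 ≤ r) (hr1 : r ≤ 1) :
    ∑ j ∈ Finset.range (m + 1), |(P m bi r).coeff j| ≤ 3 ^ m := by
  have hstep : ∀ j ∈ Finset.range (m + 1), |(P m bi r).coeff j|
      ≤ ∑ i ∈ Finset.range (m + 1),
          (m.choose i : ℝ) * ((X + C r) ^ i * (X + C (1 - r)) ^ (m - i) : ℝ[X]).coeff j := by
    intro j _
    rw [P, finset_sum_coeff]
    refine (Finset.abs_sum_le_sum_abs _ _).trans (Finset.sum_le_sum fun i hi => ?_)
    have hi' : i ≤ m := Nat.lt_succ_iff.mp (Finset.mem_range.mp hi)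
    rw [mul_assoc, coeff_C_mul, abs_mul]
    have hb : |(bi i : ℝ)| ≤ (m.choose i : ℝ) := by
      have := hbi i hi'
      calc |(bi i : ℝ)| = ((|bi i| : ℤ) : ℝ) := by push_cast; ring
        _ ≤ ((m.choose i : ℤ) : ℝ) := by exact_mod_cast this
        _ = (m.choose i : ℝ) := by push_cast; ring
    exact mul_le_mul hb (abs_coeff_term_le r hr0 hr1 i (m - i) j) (abs_nonneg _)
      (Nat.cast_nonneg _)
  calc ∑ j ∈ Finset.range (m + 1), |(P m bi r).coeff j|
      ≤ ∑ j ∈ Finset.range (m + 1), ∑ i ∈ Finset.range (m + 1),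
          (m.choose i : ℝ) * ((X + C r) ^ i * (X + C (1 - r)) ^ (m - i) : ℝ[X]).coeff j :=
        Finset.sum_le_sum hstep
    _ = ∑ i ∈ Finset.range (m + 1),
          (m.choose i : ℝ) * ∑ j ∈ Finset.range (m + 1),
            ((X + C r) ^ i * (X + C (1 - r)) ^ (m - i) : ℝ[X]).coeff j := by
        rw [Finset.sum_comm]
        exact Finset.sum_congr rfl fun i _ => by rw [Finset.mul_sum]
    _ = ∑ i ∈ Finset.range (m + 1), (m.choose i : ℝ) * ((1 + r) ^ i * (2 - r) ^ (m - i)) := by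
        refine Finset.sum_congr rfl fun i hi => ?_
        rw [sum_coeff_prod r m i (Nat.lt_succ_iff.mp (Finset.mem_range.mp hi))]
    _ = ((1 + r) + (2 - r)) ^ m := by
        rw [add_pow]
        exact Finset.sum_congr rfl fun i _ => by ring
    _ = 3 ^ m := by norm_num

/-- Integer polynomial whose cast is `b^m • P`. -/
noncomputable def Z (a b m : ℕ) (bi : ℕ → ℤ) : ℤ[X] :=
  ∑ i ∈ Finset.range (m + 1),
    C (bi i) * (C (b : ℤ) * X + C (a : ℤ)) ^ i * (C ((b : ℤ) - (a : ℤ)) - C (b : ℤ) * X) ^ (m - i)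

lemma Z_map (a b m : ℕ) (hb : 1 ≤ b) (bi : ℕ → ℤ) :
    (Z a b m bi).map (Int.castRingHom ℝ) = C ((b : ℝ) ^ m) * P m bi ((a : ℝ) / (b : ℝ)) := by
  have hb0 : (b : ℝ) ≠ 0 := by positivity
  set r : ℝ := (a : ℝ) / (b : ℝ) with hr
  have hbr : (b : ℝ) * r = (a : ℝ) := by rw [hr]; field_simp
  have h1 : (C (b : ℝ) * X + C (a : ℝ) : ℝ[X]) = C (b : ℝ) * (X + C r) := by
    rw [mul_add, ← C_mul, hbr]
  have h2 : (C ((b : ℝ) - (a : ℝ)) - C (b : ℝ) * X : ℝ[X]) = C (b : ℝ) * (C (1 - r) - X) := by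
    rw [mul_sub, ← C_mul, mul_sub, mul_one, hbr, map_sub]
  rw [Z, P, Polynomial.map_sum, Finset.mul_sum]
  refine Finset.sum_congr rfl fun i hi => ?_
  have hi' : i ≤ m := Nat.lt_succ_iff.mp (Finset.mem_range.mp hi)
  rw [Polynomial.map_mul, Polynomial.map_mul, Polynomial.map_pow, Polynomial.map_pow]
  simp only [Polynomial.map_add, Polynomial.map_sub, Polynomial.map_mul, map_C, map_X,
    Int.coe_castRingHom]
  push_cast
  rw [h1, h2, mul_pow, mul_pow, ← C_pow, ← C_pow]
  have hbm : (C ((b:ℝ)^i) * C ((b:ℝ)^(m-i)) : Polynomial ℝ) = C ((b:ℝ)^m) := by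
    rw [← C_mul, ← pow_add, Nat.add_sub_cancel' hi']
  calc C ((bi i : ℤ) : ℝ) * (C ((b:ℝ)^i) * (X + C r)^i) * (C ((b:ℝ)^(m-i)) * (C (1-r) - X)^(m-i))
      = (C ((b:ℝ)^i) * C ((b:ℝ)^(m-i))) *
          (C ((bi i : ℤ) : ℝ) * (X + C r)^i * (C (1-r) - X)^(m-i)) := by ring
    _ = C ((b:ℝ)^m) * (C ((bi i : ℤ) : ℝ) * (X + C r)^i * (C (1-r) - X)^(m-i)) := by rw [hbm]

lemma coeff_P_lb (a b m : ℕ) (hb : 1 ≤ b) (bi : ℕ → ℤ) (j : ℕ)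
    (h : (P m bi ((a : ℝ) / (b : ℝ))).coeff j ≠ 0) :
    1 / (b : ℝ) ^ m ≤ |(P m bi ((a : ℝ) / (b : ℝ))).coeff j| := by
  have hb0 : (0 : ℝ) < (b : ℝ) ^ m := by positivity
  have hcoeff : ((Z a b m bi).coeff j : ℝ)
      = (b : ℝ) ^ m * (P m bi ((a : ℝ) / (b : ℝ))).coeff j := by
    have h2 := congrArg (fun q : Polynomial ℝ => q.coeff j) (Z_map a b m hb bi)
    simp only [coeff_map, coeff_C_mul, Int.coe_castRingHom] at h2
    exact h2
  have hz : (Z a b m bi).coeff j ≠ 0 := by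
    intro h0
    rw [h0, Int.cast_zero] at hcoeff
    rcases mul_eq_zero.mp hcoeff.symm with h' | h'
    · exact absurd h' hb0.ne'
    · exact h h'
  have hz1 : (1 : ℝ) ≤ |((Z a b m bi).coeff j : ℝ)| := by
    rw [← Int.cast_abs]
    exact_mod_cast Int.one_le_abs hz
  rw [hcoeff, abs_mul, abs_of_nonneg hb0.le] at hz1
  rw [div_le_iff₀ hb0, mul_comm]
  linarith
end Stmt9Aux

/-- Breakpoint exclusion: if `f(p) = ∑_{i=0}^m b_i p^i (1-p)^{m-i}` with
integers `|b_i| ≤ C(m,i)` is not identically zero, `m ≥ 1`, and `a/b ∈ [0,1]`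
is rational with `b ≥ 1`, then `f` has no root `p` with
`0 < |p - a/b| < (3b)^{-m}`. -/
theorem stmt_9 (a b m : ℕ) (hb : 1 ≤ b) (hab : a ≤ b) (hm : 1 ≤ m)
    (bi : ℕ → ℤ) (hbi : ∀ i ≤ m, |bi i| ≤ (m.choose i : ℤ))
    (hne : ∃ p : ℝ,
      (∑ i ∈ Finset.range (m + 1), (bi i : ℝ) * p ^ i * (1 - p) ^ (m - i)) ≠ 0) :
    ∀ p : ℝ, 0 < |p - (a : ℝ) / (b : ℝ)| →
      |p - (a : ℝ) / (b : ℝ)| < 1 / (3 * (b : ℝ)) ^ m →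
      (∑ i ∈ Finset.range (m + 1), (bi i : ℝ) * p ^ i * (1 - p) ^ (m - i)) ≠ 0 := by
  classical
  intro p hpos hlt hroot
  set r : ℝ := (a : ℝ) / (b : ℝ) with hrdef
  have hbR : (0 : ℝ) < (b : ℝ) := by exact_mod_cast hb
  have hb1 : (1 : ℝ) ≤ (b : ℝ) := by exact_mod_cast hb
  have hr0 : 0 ≤ r := by positivity
  have hr1 : r ≤ 1 := by
    rw [hrdef, div_le_one hbR]; exact_mod_cast hab
  set Q : Polynomial ℝ := Stmt9Aux.P m bi r with hQ
  have hevalQ : ∀ t : ℝ, Q.eval t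
      = ∑ i ∈ Finset.range (m + 1), (bi i : ℝ) * (r + t) ^ i * (1 - (r + t)) ^ (m - i) :=
    fun t => Stmt9Aux.eval_P m bi r t
  -- Q is nonzero
  have hQne : Q ≠ 0 := by
    obtain ⟨p0, hp0⟩ := hne
    intro h0
    apply hp0
    have := hevalQ (p0 - r)
    rw [h0] at this
    simp only [Polynomial.eval_zero] at this
    rw [show r + (p0 - r) = p0 by ring] at this
    exact this.symm
  set t : ℝ := p - r with htdef
  have hroot' : Q.eval t = 0 := by
    rw [hevalQ t, show r + t = p by rw [htdef]; ring]
    exact hroot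
  -- minimal nonzero coefficient
  have hex : ∃ j, Q.coeff j ≠ 0 := by
    by_contra h
    push_neg at h
    exact hQne (Polynomial.ext fun j => by simp [h j])
  set j0 := Nat.find hex with hj0
  have hcj0 : Q.coeff j0 ≠ 0 := Nat.find_spec hex
  have hmin : ∀ j < j0, Q.coeff j = 0 := fun j hj => by
    have h2 := Nat.find_min hex (m := j) hj
    simpa using h2
  have hj0m : j0 ≤ m :=
    le_trans (Polynomial.le_natDegree_of_ne_zero hcj0) (Stmt9Aux.natDegree_P_le m bi r)
  -- expansion of eval
  have hdeg : Q.natDegree < m + 1 := Nat.lt_succ_of_le (Stmt9Aux.natDegree_P_le m bi r)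
  have hsum : ∑ j ∈ Finset.range (m + 1), Q.coeff j * t ^ j = 0 := by
    rw [← Polynomial.eval_eq_sum_range' hdeg t, hroot']
  -- split the sum
  have habs_t : |t| < 1 / (3 * (b : ℝ)) ^ m := hlt
  have ht0 : 0 < |t| := hpos
  have h3b : (1 : ℝ) ≤ (3 * (b : ℝ)) ^ m := one_le_pow₀ (by linarith)
  have ht1 : |t| ≤ 1 := le_of_lt (lt_of_lt_of_le habs_t (by
    rw [div_le_one (by positivity)]; exact h3b))
  have hsplit : Q.coeff j0 * t ^ j0
      = -∑ j ∈ Finset.Ioc j0 m, Q.coeff j * t ^ j := by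
    have hrange : Finset.range (m + 1) = Finset.range j0 ∪ {j0} ∪ Finset.Ioc j0 m := by
      ext x
      simp only [Finset.mem_union, Finset.mem_range, Finset.mem_singleton, Finset.mem_Ioc]
      omega
    rw [hrange] at hsum
    rw [Finset.sum_union, Finset.sum_union] at hsum
    · simp only [Finset.sum_singleton] at hsum
      have hz : ∑ j ∈ Finset.range j0, Q.coeff j * t ^ j = 0 :=
        Finset.sum_eq_zero fun j hj => by
          rw [hmin j (Finset.mem_range.mp hj), zero_mul]
      rw [hz, zero_add] at hsum
      linarith
    · rw [Finset.disjoint_left]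
      intro x hx
      simp only [Finset.mem_range, Finset.mem_singleton] at hx ⊢
      omega
    · rw [Finset.disjoint_left]
      intro x hx
      simp only [Finset.mem_union, Finset.mem_range, Finset.mem_singleton,
        Finset.mem_Ioc] at hx ⊢
      omega
  -- bound the tail
  have hcoeffsum : ∑ j ∈ Finset.range (m + 1), |Q.coeff j| ≤ 3 ^ m :=
    Stmt9Aux.sum_abs_coeff_le m bi hbi r hr0 hr1
  have htail : |Q.coeff j0| * |t| ^ j0 ≤ 3 ^ m * |t| ^ (j0 + 1) := by
    calc |Q.coeff j0| * |t| ^ j0 = |Q.coeff j0 * t ^ j0| := by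
          rw [abs_mul, abs_pow]
      _ = |∑ j ∈ Finset.Ioc j0 m, Q.coeff j * t ^ j| := by rw [hsplit, abs_neg]
      _ ≤ ∑ j ∈ Finset.Ioc j0 m, |Q.coeff j * t ^ j| := Finset.abs_sum_le_sum_abs _ _
      _ ≤ ∑ j ∈ Finset.Ioc j0 m, |Q.coeff j| * |t| ^ (j0 + 1) := by
          refine Finset.sum_le_sum fun j hj => ?_
          rw [abs_mul, abs_pow]
          have hj' := Finset.mem_Ioc.mp hj
          exact mul_le_mul_of_nonneg_left
            (pow_le_pow_of_le_one (abs_nonneg t) ht1 (by omega)) (abs_nonneg _)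
      _ = (∑ j ∈ Finset.Ioc j0 m, |Q.coeff j|) * |t| ^ (j0 + 1) := by
          rw [Finset.sum_mul]
      _ ≤ 3 ^ m * |t| ^ (j0 + 1) := by
          refine mul_le_mul_of_nonneg_right ?_ (by positivity)
          refine le_trans (Finset.sum_le_sum_of_subset_of_nonneg ?_
            fun j _ _ => abs_nonneg _) hcoeffsum
          intro x hx
          simp only [Finset.mem_Ioc] at hx
          simp only [Finset.mem_range]
          omega
  -- conclude
  have hlb : 1 / (b : ℝ) ^ m ≤ |Q.coeff j0| := Stmt9Aux.coeff_P_lb a b m hb bi j0 hcj0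
  have hpow : (0 : ℝ) < |t| ^ j0 := pow_pos ht0 _
  have hkey : |Q.coeff j0| ≤ 3 ^ m * |t| := by
    have := htail
    rw [pow_succ] at this
    have h2 : |Q.coeff j0| * |t| ^ j0 ≤ (3 ^ m * |t|) * |t| ^ j0 := by
      calc |Q.coeff j0| * |t| ^ j0 ≤ 3 ^ m * (|t| ^ j0 * |t|) := this
        _ = (3 ^ m * |t|) * |t| ^ j0 := by ring
    exact le_of_mul_le_mul_right h2 hpow
  have hfin : 3 ^ m * |t| < 1 / (b : ℝ) ^ m := by
    have h3 : (0 : ℝ) < 3 ^ m := by positivity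
    calc (3:ℝ) ^ m * |t| < 3 ^ m * (1 / (3 * (b : ℝ)) ^ m) := by
          exact mul_lt_mul_of_pos_left habs_t h3
      _ = 1 / (b : ℝ) ^ m := by
          rw [mul_pow]
          field_simp
    
  linarith
end

section
/- Let G be a simple graph with distinguished vertices s, r and d(s,r) = k. Let A^{(k+1)} be the set of instructions uvw (u, w distinct neighbors of v) contained in some s,r-path of length at most k+1. Then for every instruction uvw ∈ A^{(k+1)}, d(s,u) < d(s,w). -/
open SimpleGraph

private lemma edist_getVert_le {V : Type*} {G : SimpleGraph V} {s r : V}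
    (P : G.Walk s r) (j : ℕ) : G.edist s (P.getVert j) ≤ j := by
  induction j with
  | zero => simp [P.getVert_zero]
  | succ j ih =>
    by_cases h : j < P.length
    · calc G.edist s (P.getVert (j + 1))
          ≤ G.edist s (P.getVert j) + G.edist (P.getVert j) (P.getVert (j + 1)) :=
            SimpleGraph.edist_triangle
        _ ≤ (j : ℕ∞) + 1 := by
            apply add_le_add ih
            have := SimpleGraph.edist_le (P.adj_getVert_succ h).toWalk
            simpa using this
        _ = ((j + 1 : ℕ) : ℕ∞) := by push_cast; ring
    · rw [P.getVert_of_length_le (by omega), ← P.getVert_of_length_le (le_of_not_gt h)]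
      exact ih.trans (by exact_mod_cast Nat.le_succ j)

private lemma edist_getVert_right_le {V : Type*} {G : SimpleGraph V} {s r : V}
    (P : G.Walk s r) {j : ℕ} (hj : j ≤ P.length) :
    G.edist (P.getVert j) r ≤ (P.length - j : ℕ) := by
  have h := edist_getVert_le P.reverse (P.length - j)
  rw [SimpleGraph.Walk.getVert_reverse] at h
  have hjj : P.length - (P.length - j) = j := by omega
  rw [hjj] at h
  rw [SimpleGraph.edist_comm]
  simpa [SimpleGraph.Walk.length_reverse] using h

/-- Let `G` be a simple graph with `d(s,r) = k`.  If the instruction `u v w`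
is contained in some `s,r`-path of length at most `k+1`, then
`d(s,u) < d(s,w)`. -/
theorem stmt_11 {V : Type*} (G : SimpleGraph V) (s r : V) (k : ℕ)
    (hk : G.dist s r = k) (u v w : V)
    (hins : ∃ P : G.Walk s r, P.IsPath ∧ P.length ≤ k + 1 ∧
      ∃ i, i + 2 ≤ P.length ∧ P.getVert i = u ∧ P.getVert (i + 1) = v ∧
        P.getVert (i + 2) = w) :
    G.dist s u < G.dist s w := by
  obtain ⟨P, -, hlen, i, hi, hu, hv, hw⟩ := hins
  -- basic edist facts
  have hsu : G.edist s u ≤ (i : ℕ∞) := hu ▸ edist_getVert_le P i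
  have hsw : G.edist s w ≤ ((i + 2 : ℕ) : ℕ∞) := hw ▸ edist_getVert_le P (i + 2)
  have hwr : G.edist w r ≤ ((P.length - (i + 2) : ℕ) : ℕ∞) :=
    hw ▸ edist_getVert_right_le P hi
  have hsr : G.edist s r = (k : ℕ∞) := by
    have hne : G.edist s r ≠ ⊤ := by
      intro h
      have := SimpleGraph.edist_le P
      rw [h] at this
      simp at this
    rw [← hk, SimpleGraph.dist]
    exact (ENat.coe_toNat hne).symm
  -- convert to ℕ
  have h1 : G.dist s u ≤ i := by
    have := ENat.toNat_le_toNat hsu (by simp)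
    simpa [SimpleGraph.dist] using this
  have h2 : G.dist w r ≤ P.length - (i + 2) := by
    have := ENat.toNat_le_toNat hwr (by simp)
    rw [ENat.toNat_coe] at this
    simpa [SimpleGraph.dist] using this
  have h4 : (G.edist s w) ≠ ⊤ := ne_top_of_le_ne_top (ENat.coe_ne_top _) hsw
  have h5 : G.edist s w = (G.dist s w : ℕ∞) := (ENat.coe_toNat h4).symm
  have h6 : G.edist w r = (G.dist w r : ℕ∞) :=
    (ENat.coe_toNat (ne_top_of_le_ne_top (ENat.coe_ne_top _) hwr)).symm
  have htri : (k : ℕ∞) ≤ (G.dist s w : ℕ∞) + (G.dist w r : ℕ∞) := by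
    rw [← h5, ← h6, ← hsr]
    exact SimpleGraph.edist_triangle
  have h3 : k ≤ G.dist s w + G.dist w r := by exact_mod_cast htri
  omega
end
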